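/- Let S = {s_1, …, s_d} with d ≥ 2, let μ_1, …, μ_N be full-support probability measures on S, and let P = ⊗_{i=1}^N μ_i be the product measure on S^N. For ω ∈ S^N let Φ(ω) ∈ ℝ^{d−1} be the vector of empirical frequencies of s_1, …, s_{d−1}; let μ̄ ∈ ℝ^{d−1} be the vector with entries N⁻¹ Σ_{i=1}^N μ_i({s_k}) for k = 1, …, d−1; let Σ̄ = N⁻¹ Σ_{i=1}^N Σ(p_i) (where p_i ∈ ℝ^{d−1} is the marginal vector of μ_i and Σ(p) = diag(p) − p pᵀ), and let Σ̂ = Σ(μ̄). Then for every c ≥ 0, P({ ω : N·(Φ(ω) − μ̄)ᵀ Σ̄⁻¹ (Φ(ω) − μ̄) ≤ c }) ≤ P({ ω : N·(Φ(ω) − μ̄)ᵀ Σ̂⁻¹ (Φ(ω) − μ̄) ≤ c }). That is, under any independent but non-identical DGP, the acceptance region built from the i.i.d. distribution with the same average marginal receives at least as much probability as the acceptance region built from the DGP's own average covariance matrix. -/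

import Mathlib

open MeasureTheory Matrix

/-- The multinomial covariance matrix `Σ(p) = diag(p) − p pᵀ` associated with a
marginal probability vector `p` over the first `d − 1` of `d` outcomes. -/
noncomputable def multinomialCov {ι : Type*} [Fintype ι] [DecidableEq ι]
    (p : ι → ℝ) : Matrix ι ι ℝ :=
  Matrix.diagonal p - Matrix.vecMulVec p p

/-- The vector in `ℝ^{d−1}` of empirical frequencies of the first `d − 1`
outcomes in a sample `ω ∈ S^N`, where `S = Fin d`. -/
noncomputable def empFreq (d N : ℕ) (ω : Fin N → Fin d) : Fin (d - 1) → ℝ :=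
  fun k => (N : ℝ)⁻¹ *
    ∑ i, (if ω i = Fin.castLE (Nat.sub_le d 1) k then (1 : ℝ) else 0)

/-- The vector in `ℝ^{d−1}` of probabilities of the first `d − 1` outcomes
under a measure on `Fin d`. -/
noncomputable def margVec (d : ℕ) (μ : Measure (Fin d)) : Fin (d - 1) → ℝ :=
  fun k => (μ {Fin.castLE (Nat.sub_le d 1) k}).toReal

section Aux

variable {ι : Type*} [Fintype ι] [DecidableEq ι]

/-- Symmetry of the bilinear form of a real Hermitian (i.e. symmetric) matrix. -/
lemma aux_dot_symm (M : Matrix ι ι ℝ) (hM : M.IsHermitian) (u v : ι → ℝ) :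
    u ⬝ᵥ M *ᵥ v = v ⬝ᵥ M *ᵥ u := by
  have ht : Mᵀ = M := by
    have := hM.eq
    rwa [conjTranspose_eq_transpose_of_trivial] at this
  rw [dotProduct_mulVec, ← Matrix.mulVec_transpose, ht]
  exact dotProduct_comm _ _

/-- The key Loewner-order fact: if `A ⪯ B` with `A` positive definite, then the
quadratic form of `B⁻¹` is dominated by that of `A⁻¹`. -/
lemma aux_key_quad_ineq {A B : Matrix ι ι ℝ} (hA : A.PosDef)
    (hBA : (B - A).PosSemidef) (x : ι → ℝ) :
    x ⬝ᵥ B⁻¹ *ᵥ x ≤ x ⬝ᵥ A⁻¹ *ᵥ x := by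
  have hB : B.PosDef := by
    have := hA.add_posSemidef hBA
    simpa using this
  set w := A⁻¹ *ᵥ x with hw
  set y := B⁻¹ *ᵥ x with hy
  have hxA : A *ᵥ w = x := by
    rw [hw, mulVec_mulVec, Matrix.mul_nonsing_inv _ ((Matrix.isUnit_iff_isUnit_det _).mp hA.isUnit),
      one_mulVec]
  have hxB : B *ᵥ y = x := by
    rw [hy, mulVec_mulVec, Matrix.mul_nonsing_inv _ ((Matrix.isUnit_iff_isUnit_det _).mp hB.isUnit),
      one_mulVec]
  have e1 : x ⬝ᵥ w = w ⬝ᵥ A *ᵥ w := by rw [dotProduct_comm, ← hxA]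
  have e2 : x ⬝ᵥ y = y ⬝ᵥ B *ᵥ y := by rw [dotProduct_comm, ← hxB]
  have e3 : y ⬝ᵥ B *ᵥ y = y ⬝ᵥ A *ᵥ w := by rw [hxA, hxB]
  have h1 : 0 ≤ (y - w) ⬝ᵥ A *ᵥ (y - w) := by
    have := hA.posSemidef.dotProduct_mulVec_nonneg (y - w)
    simpa using this
  have hexp : (y - w) ⬝ᵥ A *ᵥ (y - w)
      = y ⬝ᵥ A *ᵥ y - 2 * (y ⬝ᵥ A *ᵥ w) + w ⬝ᵥ A *ᵥ w := by
    rw [mulVec_sub, dotProduct_sub, sub_dotProduct, sub_dotProduct,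
      aux_dot_symm A hA.isHermitian w y]
    ring
  have h2 : y ⬝ᵥ A *ᵥ y ≤ y ⬝ᵥ B *ᵥ y := by
    have := hBA.dotProduct_mulVec_nonneg y
    simp only [sub_mulVec, dotProduct_sub, star_trivial] at this
    linarith
  rw [hexp] at h1
  linarith

/-- The quadratic form of the multinomial covariance matrix. -/
lemma aux_quad_mc (p x : ι → ℝ) :
    x ⬝ᵥ multinomialCov p *ᵥ x = (∑ k, p k * x k ^ 2) - (p ⬝ᵥ x) ^ 2 := by
  have h1 : x ⬝ᵥ (Matrix.diagonal p) *ᵥ x = ∑ k, p k * x k ^ 2 := by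
    simp [dotProduct, mulVec_diagonal]
    exact Finset.sum_congr rfl fun k _ => by ring
  have h2 : (Matrix.vecMulVec p p) *ᵥ x = fun i => p i * (p ⬝ᵥ x) := by
    ext i
    simp [mulVec, vecMulVec, dotProduct, Finset.mul_sum, mul_assoc]
  have h3 : x ⬝ᵥ (fun i => p i * (p ⬝ᵥ x)) = (p ⬝ᵥ x) ^ 2 := by
    have e : ∀ k, x k * (p k * (p ⬝ᵥ x)) = (p k * x k) * (p ⬝ᵥ x) := fun k => by ring
    calc x ⬝ᵥ (fun i => p i * (p ⬝ᵥ x)) = ∑ k, (p k * x k) * (p ⬝ᵥ x) :=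
          Finset.sum_congr rfl fun k _ => e k
      _ = (∑ k, p k * x k) * (p ⬝ᵥ x) := by rw [Finset.sum_mul]
      _ = (p ⬝ᵥ x) ^ 2 := by rw [sq]; rfl
  rw [multinomialCov, sub_mulVec, dotProduct_sub, h1, h2, h3]

lemma aux_mc_herm (p : ι → ℝ) : (multinomialCov p).IsHermitian := by
  ext i j
  by_cases h : i = j
  · subst h; simp [multinomialCov, conjTranspose_apply]
  · simp [multinomialCov, conjTranspose_apply, Matrix.sub_apply, Matrix.diagonal_apply,
      vecMulVec_apply, h, Ne.symm h, mul_comm]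

/-- Positive definiteness of the multinomial covariance matrix for a full-support
marginal vector. -/
lemma aux_mc_posDef {p : ι → ℝ} (hp : ∀ k, 0 < p k) (hs : ∑ k, p k < 1) :
    (multinomialCov p).PosDef := by
  refine Matrix.PosDef.of_dotProduct_mulVec_pos (aux_mc_herm p) fun x hx => ?_
  simp only [star_trivial]
  rw [aux_quad_mc]
  have hpos : 0 < ∑ k, p k * x k ^ 2 := by
    obtain ⟨k0, hk0⟩ := Function.ne_iff.mp hx
    refine Finset.sum_pos' (fun k _ => mul_nonneg (hp k).le (sq_nonneg _))
      ⟨k0, Finset.mem_univ _, ?_⟩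
    exact mul_pos (hp k0)
      (lt_of_le_of_ne (sq_nonneg _) (Ne.symm (pow_ne_zero 2 hk0)))
  have hcs : (p ⬝ᵥ x) ^ 2 ≤ (∑ k, p k) * ∑ k, p k * x k ^ 2 := by
    have := Finset.sum_mul_sq_le_sq_mul_sq Finset.univ
      (fun k => Real.sqrt (p k)) (fun k => Real.sqrt (p k) * x k)
    have e1 : ∀ k : ι, Real.sqrt (p k) * (Real.sqrt (p k) * x k) = p k * x k := fun k => by
      rw [← mul_assoc, Real.mul_self_sqrt (hp k).le]
    have e2 : ∀ k : ι, Real.sqrt (p k) ^ 2 = p k := fun k => Real.sq_sqrt (hp k).le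
    have e3 : ∀ k : ι, (Real.sqrt (p k) * x k) ^ 2 = p k * x k ^ 2 := fun k => by
      rw [mul_pow, e2]
    simp only [e1, e2, e3] at this
    simpa [dotProduct] using this
  nlinarith [mul_lt_mul_of_pos_right hs hpos]

/-- The quadratic form of an average of matrices. -/
lemma aux_avg_quad {N : ℕ} (M : Fin N → Matrix ι ι ℝ) (x : ι → ℝ) :
    x ⬝ᵥ ((N : ℝ)⁻¹ • ∑ i, M i) *ᵥ x = (N : ℝ)⁻¹ * ∑ i, x ⬝ᵥ M i *ᵥ x := by
  have h1 : (∑ i, M i) *ᵥ x = ∑ i, M i *ᵥ x :=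
    map_sum (Matrix.mulVec.addMonoidHomLeft x) M Finset.univ
  have h2 : x ⬝ᵥ (∑ i, M i *ᵥ x) = ∑ i, x ⬝ᵥ M i *ᵥ x := by
    simp only [dotProduct, Finset.sum_apply, Finset.mul_sum]
    exact Finset.sum_comm
  rw [smul_mulVec, dotProduct_smul, h1, h2, smul_eq_mul]

lemma aux_avg_herm {N : ℕ} (p : Fin N → ι → ℝ) :
    ((N : ℝ)⁻¹ • ∑ i, multinomialCov (p i)).IsHermitian := by
  have hsum : (∑ i, multinomialCov (p i)).IsHermitian := by
    show _ = _
    rw [conjTranspose_sum]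
    exact Finset.sum_congr rfl fun i _ => (aux_mc_herm (p i)).eq
  show _ = _
  rw [conjTranspose_smul]
  rw [hsum.eq]
  norm_num

/-- Jensen-type inequality: the covariance of the averaged marginal dominates
the averaged covariance in the Loewner order. -/
lemma aux_avg_psd {N : ℕ} (hN : 1 ≤ N) (p : Fin N → ι → ℝ) :
    (multinomialCov ((N : ℝ)⁻¹ • ∑ i, p i)
      - (N : ℝ)⁻¹ • ∑ i, multinomialCov (p i)).PosSemidef := by
  have hn : (0 : ℝ) < N := by exact_mod_cast Nat.lt_of_lt_of_le Nat.zero_lt_one hN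
  refine Matrix.PosSemidef.of_dotProduct_mulVec_nonneg ((aux_mc_herm _).sub (aux_avg_herm p)) fun x => ?_
  simp only [star_trivial, sub_mulVec, dotProduct_sub, sub_nonneg]
  rw [aux_quad_mc, aux_avg_quad]
  have hq : ∀ i, x ⬝ᵥ multinomialCov (p i) *ᵥ x
      = (∑ k, p i k * x k ^ 2) - (p i ⬝ᵥ x) ^ 2 := fun i => aux_quad_mc _ _
  simp only [hq, Finset.sum_sub_distrib]
  have f2 : ∑ k, ((N : ℝ)⁻¹ • ∑ i, p i) k * x k ^ 2
      = (N : ℝ)⁻¹ * ∑ i, ∑ k, p i k * x k ^ 2 := by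
    simp only [Pi.smul_apply, Finset.sum_apply, smul_eq_mul, Finset.mul_sum]
    rw [Finset.sum_comm]
    exact Finset.sum_congr rfl fun k _ => by
      rw [Finset.sum_mul]; exact Finset.sum_congr rfl fun i _ => by ring
  have f3 : ((N : ℝ)⁻¹ • ∑ i, p i) ⬝ᵥ x = (N : ℝ)⁻¹ * ∑ i, (p i ⬝ᵥ x) := by
    simp only [dotProduct, Pi.smul_apply, Finset.sum_apply, smul_eq_mul, Finset.mul_sum]
    rw [Finset.sum_comm]
    exact Finset.sum_congr rfl fun k _ => by
      rw [Finset.sum_mul]; exact Finset.sum_congr rfl fun i _ => by ring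
  rw [f2, f3]
  have hcs : (∑ i, p i ⬝ᵥ x) ^ 2 ≤ (N : ℝ) * ∑ i, (p i ⬝ᵥ x) ^ 2 := by
    have := sq_sum_le_card_mul_sum_sq (s := (Finset.univ : Finset (Fin N)))
      (f := fun i => p i ⬝ᵥ x)
    simpa using this
  have hinv : (0 : ℝ) ≤ (N : ℝ)⁻¹ * (N : ℝ)⁻¹ := by positivity
  have h := mul_le_mul_of_nonneg_left hcs hinv
  have hne : (N : ℝ) ≠ 0 := hn.ne'
  have : (N : ℝ)⁻¹ * (N : ℝ)⁻¹ * ((N : ℝ) * ∑ i, (p i ⬝ᵥ x) ^ 2)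
      = (N : ℝ)⁻¹ * ∑ i, (p i ⬝ᵥ x) ^ 2 := by field_simp
  nlinarith [h]

end Aux

lemma aux_margVec_pos (d : ℕ) (μ : Measure (Fin d)) [IsProbabilityMeasure μ]
    (hfull : ∀ s, 0 < μ {s}) (k : Fin (d - 1)) : 0 < margVec d μ k :=
  ENNReal.toReal_pos (hfull _).ne' (measure_ne_top μ _)

lemma aux_margVec_sum_lt_one (d : ℕ) (hd : 2 ≤ d) (μ : Measure (Fin d))
    [IsProbabilityMeasure μ] (hfull : ∀ s, 0 < μ {s}) :
    ∑ k, margVec d μ k < 1 := by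
  set t : Fin d := ⟨d - 1, by omega⟩ with ht
  set F : Finset (Fin d) := Finset.univ.image (Fin.castLE (Nat.sub_le d 1)) with hF
  have hinj : Function.Injective (Fin.castLE (Nat.sub_le d 1)) := Fin.castLE_injective _
  have h1 : ∑ k, margVec d μ k = ∑ s ∈ F, (μ {s}).toReal := by
    rw [hF, Finset.sum_image (fun a _ b _ h => hinj h)]
    rfl
  have htF : t ∉ F := by
    simp only [hF, Finset.mem_image]
    rintro ⟨k, -, hk⟩
    have : (k : ℕ) = d - 1 := congrArg Fin.val hk
    omega
  have h2 : ∑ s ∈ insert t F, (μ {s}).toReal ≤ 1 := by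
    have hmeas : ∑ s ∈ insert t F, μ {s} ≤ 1 := by
      have : ∑ s ∈ insert t F, μ {s} = μ (⋃ s ∈ (insert t F : Finset (Fin d)), {s}) := by
        rw [measure_biUnion_finset ?_ (fun s _ => measurableSet_singleton s)]
        · intro a _ b _ hab
          exact Set.disjoint_singleton.mpr hab
      rw [this]
      exact (measure_mono (Set.subset_univ _)).trans_eq measure_univ
    have := ENNReal.toReal_mono (by norm_num) hmeas
    rwa [ENNReal.toReal_one, ENNReal.toReal_sum (fun s _ => measure_ne_top μ _)] at this
  rw [Finset.sum_insert htF] at h2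
  have h3 : 0 < (μ {t}).toReal := ENNReal.toReal_pos (hfull t).ne' (measure_ne_top μ _)
  rw [h1]
  linarith

/-- **Acceptance-region comparison.** Under any independent but possibly
non-identical DGP `P = ⊗ᵢ μᵢ` on `S^N` with full-support marginals, the
ellipsoidal acceptance region built from the i.i.d. covariance matrix `Σ̂`
(with the same average marginal) receives at least as much `P`-probability as
the region built from the DGP's own average covariance matrix `Σ̄`. -/
theorem robust_iid_acceptance_region_probability
    (d N : ℕ) (hd : 2 ≤ d) (hN : 1 ≤ N)
    (μ : Fin N → Measure (Fin d))
    (hprob : ∀ i, IsProbabilityMeasure (μ i))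
    (hfull : ∀ i s, 0 < μ i {s})
    (c : ℝ) (hc : 0 ≤ c) :
    Measure.pi μ
        {ω : Fin N → Fin d |
          (N : ℝ) * ((empFreq d N ω - (N : ℝ)⁻¹ • ∑ i, margVec d (μ i)) ⬝ᵥ
            (((N : ℝ)⁻¹ • ∑ i, multinomialCov (margVec d (μ i)))⁻¹ *ᵥ
              (empFreq d N ω - (N : ℝ)⁻¹ • ∑ i, margVec d (μ i)))) ≤ c}
      ≤ Measure.pi μ
        {ω : Fin N → Fin d |
          (N : ℝ) * ((empFreq d N ω - (N : ℝ)⁻¹ • ∑ i, margVec d (μ i)) ⬝ᵥ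
            ((multinomialCov ((N : ℝ)⁻¹ • ∑ i, margVec d (μ i)))⁻¹ *ᵥ
              (empFreq d N ω - (N : ℝ)⁻¹ • ∑ i, margVec d (μ i)))) ≤ c} := by
  have hn : (0 : ℝ) < N := by exact_mod_cast Nat.lt_of_lt_of_le Nat.zero_lt_one hN
  -- positive definiteness of the averaged covariance matrix
  have hApd : (((N : ℝ)⁻¹ • ∑ i, multinomialCov (margVec d (μ i))) :
      Matrix (Fin (d - 1)) (Fin (d - 1)) ℝ).PosDef := by
    refine Matrix.PosDef.of_dotProduct_mulVec_pos (aux_avg_herm _) fun x hx => ?_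
    simp only [star_trivial]
    rw [aux_avg_quad]
    refine mul_pos (inv_pos.mpr hn) ?_
    haveI : Nonempty (Fin N) := ⟨⟨0, hN⟩⟩
    refine Finset.sum_pos (fun i _ => ?_) Finset.univ_nonempty
    haveI := hprob i
    have hpd := aux_mc_posDef
      (fun k => aux_margVec_pos d (μ i) (hfull i) k)
      (aux_margVec_sum_lt_one d hd (μ i) (hfull i))
    have := hpd.dotProduct_mulVec_pos hx
    simpa using this
  have hpsd := aux_avg_psd hN (fun i => margVec d (μ i))
  refine measure_mono ?_
  intro ω hω
  simp only [Set.mem_setOf_eq] at hω ⊢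
  set v := empFreq d N ω - (N : ℝ)⁻¹ • ∑ i, margVec d (μ i) with hv
  have hkey : v ⬝ᵥ (multinomialCov ((N : ℝ)⁻¹ • ∑ i, margVec d (μ i)))⁻¹ *ᵥ v
      ≤ v ⬝ᵥ ((N : ℝ)⁻¹ • ∑ i, multinomialCov (margVec d (μ i)))⁻¹ *ᵥ v :=
    aux_key_quad_ineq hApd hpsd v
  calc (N : ℝ) * (v ⬝ᵥ (multinomialCov ((N : ℝ)⁻¹ • ∑ i, margVec d (μ i)))⁻¹ *ᵥ v)
      ≤ (N : ℝ) * (v ⬝ᵥ ((N : ℝ)⁻¹ • ∑ i, multinomialCov (margVec d (μ i)))⁻¹ *ᵥ v) :=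
        mul_le_mul_of_nonneg_left hkey hn.le
    _ ≤ c := hω
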